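/- Let P be a Markov transition kernel on a Polish metric space (X, ψ, B) satisfying (B1), (B2), and (B3) (with Λ: X × X → [0,∞) satisfying Λ(x,y) ≥ (PV(x) + PV(y) + 1)/(V(x) + V(y) + 1)), and let π ∈ P_ψ(X) be the limit measure guaranteed by these conditions (i.e., W_ψ(δ_x Pⁿ, π) → 0 for every x). If P is weak Feller (i.e., Pf is bounded and continuous whenever f: X → ℝ is bounded and continuous), then π is the unique stationary distribution of P. -/

import Mathlib

open MeasureTheory ProbabilityTheory ENNReal NNReal Filter BoundedContinuousFunction

/-- A coupling of two measures: a measure on the product with the given marginals. -/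
def IsCoupling {X : Type*} [MeasurableSpace X] (υ : Measure (X × X)) (μ ν : Measure X) : Prop :=
  υ.map Prod.fst = μ ∧ υ.map Prod.snd = ν

/-- The `L₁`-Wasserstein divergence `W_ψ` induced by the metric `ψ = dist` of `X`. -/
noncomputable def wassDist {X : Type*} [MeasurableSpace X] [PseudoMetricSpace X]
    (μ ν : Measure X) : ℝ≥0∞ :=
  ⨅ (υ : Measure (X × X)) (_ : IsProbabilityMeasure υ) (_ : IsCoupling υ μ ν),
    ∫⁻ p, ENNReal.ofReal (dist p.1 p.2) ∂υ

/-- The `n`-step evolution `μ Pⁿ` of a measure under a Markov transition kernel. -/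
noncomputable def stepN {X : Type*} [MeasurableSpace X] (P : Kernel X X) :
    ℕ → Measure X → Measure X
  | 0, μ => μ
  | n + 1, μ => (stepN P n μ).bind (fun x => P x)

/-- Membership in `P_ψ(X)`: `∫ ψ(x,·) dμ < ∞` for some `x`. -/
def memPpsi {X : Type*} [MeasurableSpace X] [PseudoMetricSpace X] (μ : Measure X) : Prop :=
  ∃ x : X, ∫⁻ y, ENNReal.ofReal (dist x y) ∂μ < ⊤

/-! ### Auxiliary lemmas -/

section Aux

lemma auxNonempty {α : Type*} [MeasurableSpace α] {μ : Measure α}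
    (hμ : IsProbabilityMeasure μ) : Nonempty α := by
  by_contra h
  haveI : IsEmpty α := not_nonempty_iff.mp h
  have h1 : μ Set.univ = 1 := hμ.measure_univ
  rw [Set.univ_eq_empty_iff.mpr ‹_›, measure_empty] at h1
  exact zero_ne_one h1

lemma auxIntegrable {α : Type*} [MeasurableSpace α] {μ : Measure α} [IsFiniteMeasure μ]
    {f : α → ℝ} (hm : AEStronglyMeasurable f μ) {M : ℝ} (hM : ∀ x, |f x| ≤ M) :
    Integrable f μ :=
  (integrable_const M).mono' hm (Filter.Eventually.of_forall fun x => by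
    rw [Real.norm_eq_abs]; exact hM x)

variable {X : Type*} [MetricSpace X] [SecondCountableTopology X] [MeasurableSpace X] [BorelSpace X]

/-- The Wasserstein distance controls differences of integrals of Lipschitz functions. -/
lemma auxWassLip {μ ν : Measure X} (hμ : IsProbabilityMeasure μ) (hν : IsProbabilityMeasure ν)
    {K : ℝ≥0} {f : X → ℝ} (hf : LipschitzWith K f) {M : ℝ} (hM : ∀ x, |f x| ≤ M) :
    ENNReal.ofReal |(∫ x, f x ∂μ) - ∫ x, f x ∂ν| ≤ (K : ℝ≥0∞) * wassDist μ ν := by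
  haveI := hμ; haveI := hν
  have hmf : Measurable f := hf.continuous.measurable
  have key : ∀ υ : Measure (X × X), IsProbabilityMeasure υ → IsCoupling υ μ ν →
      ENNReal.ofReal |(∫ x, f x ∂μ) - ∫ x, f x ∂ν| ≤
        (K : ℝ≥0∞) * ∫⁻ p, ENNReal.ofReal (dist p.1 p.2) ∂υ := by
    intro υ hυp hυc
    haveI := hυp
    have h1 : ∫ x, f x ∂μ = ∫ p : X × X, f p.1 ∂υ := by
      rw [← hυc.1, integral_map measurable_fst.aemeasurable hmf.aestronglyMeasurable]
    have h2 : ∫ x, f x ∂ν = ∫ p : X × X, f p.2 ∂υ := by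
      rw [← hυc.2, integral_map measurable_snd.aemeasurable hmf.aestronglyMeasurable]
    have hi1 : Integrable (fun p : X × X => f p.1) υ :=
      auxIntegrable ((hmf.comp measurable_fst).aestronglyMeasurable) (fun p => hM p.1)
    have hi2 : Integrable (fun p : X × X => f p.2) υ :=
      auxIntegrable ((hmf.comp measurable_snd).aestronglyMeasurable) (fun p => hM p.2)
    have hdiff : (∫ x, f x ∂μ) - ∫ x, f x ∂ν = ∫ p : X × X, (f p.1 - f p.2) ∂υ := by
      rw [h1, h2, integral_sub hi1 hi2]
    have habs : |∫ p : X × X, (f p.1 - f p.2) ∂υ| ≤ ∫ p : X × X, |f p.1 - f p.2| ∂υ := by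
      simpa [Real.norm_eq_abs] using
        norm_integral_le_integral_norm (μ := υ) (fun p : X × X => f p.1 - f p.2)
    calc ENNReal.ofReal |(∫ x, f x ∂μ) - ∫ x, f x ∂ν|
        = ENNReal.ofReal |∫ p : X × X, (f p.1 - f p.2) ∂υ| := by rw [hdiff]
      _ ≤ ENNReal.ofReal (∫ p : X × X, |f p.1 - f p.2| ∂υ) := ENNReal.ofReal_le_ofReal habs
      _ = ∫⁻ p : X × X, ENNReal.ofReal (|f p.1 - f p.2|) ∂υ :=
          ofReal_integral_eq_lintegral_ofReal (hi1.sub hi2).abs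
            (Filter.Eventually.of_forall fun p => abs_nonneg _)
      _ ≤ ∫⁻ p : X × X, (K : ℝ≥0∞) * ENNReal.ofReal (dist p.1 p.2) ∂υ := by
          apply lintegral_mono
          intro p
          have hd : |f p.1 - f p.2| ≤ (K : ℝ) * dist p.1 p.2 := by
            have := hf.dist_le_mul p.1 p.2
            rwa [Real.dist_eq] at this
          calc ENNReal.ofReal |f p.1 - f p.2| ≤ ENNReal.ofReal ((K : ℝ) * dist p.1 p.2) :=
                ENNReal.ofReal_le_ofReal hd
            _ = ENNReal.ofReal (K : ℝ) * ENNReal.ofReal (dist p.1 p.2) :=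
                ENNReal.ofReal_mul K.coe_nonneg
            _ = (K : ℝ≥0∞) * ENNReal.ofReal (dist p.1 p.2) := by
                rw [ENNReal.ofReal_coe_nnreal]
      _ = (K : ℝ≥0∞) * ∫⁻ p : X × X, ENNReal.ofReal (dist p.1 p.2) ∂υ := by
          rw [lintegral_const_mul _ ((measurable_fst.dist measurable_snd).ennreal_ofReal)]
  by_cases hK : K = 0
  · subst hK
    have hconst : ∀ x y : X, f x = f y := by
      intro x y
      have := hf.dist_le_mul x y
      simp only [NNReal.coe_zero, zero_mul] at this
      exact dist_le_zero.mp this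
    obtain ⟨x₀⟩ := auxNonempty hμ
    have hfx : f = fun _ => f x₀ := funext fun x => hconst x x₀
    rw [hfx]
    simp [integral_const, measure_univ]
  · rcases eq_top_or_lt_top (wassDist μ ν) with hW | hW
    · rw [hW, ENNReal.mul_top (by exact_mod_cast hK)]
      exact le_top
    · refine ENNReal.le_of_forall_pos_le_add fun ε hε _ => ?_
      have hεK : (ε : ℝ≥0∞) / (K : ℝ≥0∞) ≠ 0 := by
        simp [ENNReal.div_eq_zero_iff, hε.ne', ENNReal.coe_ne_top]
      have hlt : wassDist μ ν < wassDist μ ν + (ε : ℝ≥0∞) / (K : ℝ≥0∞) :=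
        ENNReal.lt_add_right hW.ne hεK
      conv_lhs at hlt => rw [wassDist]
      simp only [iInf_lt_iff] at hlt
      obtain ⟨υ, hp, hc, hI⟩ := hlt
      calc ENNReal.ofReal |(∫ x, f x ∂μ) - ∫ x, f x ∂ν|
          ≤ (K : ℝ≥0∞) * ∫⁻ p : X × X, ENNReal.ofReal (dist p.1 p.2) ∂υ := key υ hp hc
        _ ≤ (K : ℝ≥0∞) * (wassDist μ ν + (ε : ℝ≥0∞) / (K : ℝ≥0∞)) :=
            mul_le_mul_right hI.le _
        _ = (K : ℝ≥0∞) * wassDist μ ν + (ε : ℝ≥0∞) := by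
            rw [mul_add, ENNReal.mul_div_cancel (by exact_mod_cast hK) ENNReal.coe_ne_top]

/-- Convergence in Wasserstein distance gives convergence of integrals of bounded Lipschitz
functions. -/
lemma auxTendstoIntegralLip {π : Measure X} (hπ : IsProbabilityMeasure π) {μs : ℕ → Measure X}
    (hμs : ∀ n, IsProbabilityMeasure (μs n))
    (hW : Tendsto (fun n => wassDist (μs n) π) atTop (nhds 0))
    {K : ℝ≥0} {f : X → ℝ} (hf : LipschitzWith K f) {M : ℝ} (hM : ∀ x, |f x| ≤ M) :
    Tendsto (fun n => ∫ x, f x ∂(μs n)) atTop (nhds (∫ x, f x ∂π)) := by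
  have h0 : Tendsto (fun n => ENNReal.ofReal |(∫ x, f x ∂(μs n)) - ∫ x, f x ∂π|) atTop
      (nhds 0) := by
    have hub := fun n => auxWassLip (hμs n) hπ hf hM
    have hKW : Tendsto (fun n => (K : ℝ≥0∞) * wassDist (μs n) π) atTop (nhds 0) := by
      have := ENNReal.Tendsto.const_mul (a := (K : ℝ≥0∞)) hW (Or.inr ENNReal.coe_ne_top)
      simpa using this
    exact tendsto_of_tendsto_of_tendsto_of_le_of_le tendsto_const_nhds hKW
      (fun n => zero_le) hub
  have h1 : Tendsto (fun n => |(∫ x, f x ∂(μs n)) - ∫ x, f x ∂π|) atTop (nhds 0) := by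
    have h2 : Tendsto (fun n => (ENNReal.ofReal |(∫ x, f x ∂(μs n)) - ∫ x, f x ∂π|).toReal)
        atTop (nhds ((0 : ℝ≥0∞)).toReal) := (ENNReal.tendsto_toReal (by simp)).comp h0
    simpa [ENNReal.toReal_ofReal (abs_nonneg _)] using h2
  rw [tendsto_iff_dist_tendsto_zero]
  simpa [Real.dist_eq] using h1

/-- Convergence in Wasserstein distance implies weak convergence of probability measures. -/
lemma auxWeakTendsto {X : Type*} [MetricSpace X] [SecondCountableTopology X] [MeasurableSpace X]
    [BorelSpace X] (pi : ProbabilityMeasure X) (mus : ℕ → ProbabilityMeasure X)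
    (hW : Tendsto (fun n => wassDist (mus n : Measure X) (pi : Measure X)) atTop (nhds 0)) :
    Tendsto mus atTop (nhds pi) := by
  apply MeasureTheory.tendsto_of_forall_isOpen_le_liminf
  intro G hG
  by_cases hGu : G = Set.univ
  · subst hGu
    simp only [ProbabilityMeasure.coeFn_univ]
    rw [liminf_const]
  have hGc : (Gᶜ).Nonempty := Set.nonempty_compl.mpr hGu
  -- the approximating Lipschitz functions
  set F : ℕ → X → ℝ := fun k x => min 1 ((k : ℝ) * Metric.infDist x Gᶜ) with hFdef
  have hF0 : ∀ k x, 0 ≤ F k x := fun k x =>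
    le_min zero_le_one (mul_nonneg (Nat.cast_nonneg k) Metric.infDist_nonneg)
  have hF1 : ∀ k x, F k x ≤ 1 := fun k x => min_le_left _ _
  have hFabs : ∀ k x, |F k x| ≤ 1 := fun k x => abs_le.mpr ⟨by linarith [hF0 k x], hF1 k x⟩
  have hFlip : ∀ k : ℕ, LipschitzWith (k : ℝ≥0) (F k) := by
    intro k
    have h1 : LipschitzWith (k : ℝ≥0) (fun x => (k : ℝ) * Metric.infDist x Gᶜ) := by
      apply LipschitzWith.of_dist_le_mul
      intro x y
      have hinf := (Metric.lipschitz_infDist_pt (Gᶜ)).dist_le_mul x y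
      rw [Real.dist_eq, ← mul_sub, abs_mul, abs_of_nonneg (Nat.cast_nonneg (α := ℝ) k)]
      rw [Real.dist_eq] at hinf
      simp only [NNReal.coe_one, one_mul] at hinf
      have hkk : ((k : ℝ≥0) : ℝ) = (k : ℝ) := by simp
      rw [hkk]
      exact mul_le_mul_of_nonneg_left hinf (Nat.cast_nonneg k)
    exact h1.const_min 1
  have hFcont : ∀ k, Continuous (F k) := fun k =>
    continuous_const.min (continuous_const.mul (Metric.continuous_infDist_pt (Gᶜ)))
  have hFmono : ∀ x, Monotone fun k => F k x := by
    intro x i j hij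
    exact min_le_min le_rfl
      (mul_le_mul_of_nonneg_right (Nat.cast_le.mpr hij) Metric.infDist_nonneg)
  have hFleInd : ∀ k x, F k x ≤ G.indicator 1 x := by
    intro k x
    by_cases hx : x ∈ G
    · rw [Set.indicator_of_mem hx]
      exact hF1 k x
    · rw [Set.indicator_of_notMem hx]
      have hx' : x ∈ Gᶜ := hx
      simp [hFdef, Metric.infDist_zero_of_mem hx']
  have hsup : ∀ x, (⨆ k, ENNReal.ofReal (F k x)) = G.indicator (1 : X → ℝ≥0∞) x := by
    intro x
    by_cases hx : x ∈ G
    · rw [Set.indicator_of_mem hx]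
      have hd : 0 < Metric.infDist x Gᶜ :=
        ((hG.isClosed_compl).notMem_iff_infDist_pos hGc).mp (by simpa using hx)
      apply le_antisymm
      · exact iSup_le fun k => by
          simpa using ENNReal.ofReal_le_ofReal (hF1 k x)
      · have hk : F (⌈(Metric.infDist x Gᶜ)⁻¹⌉₊) x = 1 := by
          apply min_eq_left
          have h1 : (Metric.infDist x Gᶜ)⁻¹ ≤ (⌈(Metric.infDist x Gᶜ)⁻¹⌉₊ : ℝ) :=
            Nat.le_ceil _
          have h2 : (Metric.infDist x Gᶜ)⁻¹ * Metric.infDist x Gᶜ ≤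
              (⌈(Metric.infDist x Gᶜ)⁻¹⌉₊ : ℝ) * Metric.infDist x Gᶜ :=
            mul_le_mul_of_nonneg_right h1 Metric.infDist_nonneg
          rwa [inv_mul_cancel₀ hd.ne'] at h2
        calc (1 : ℝ≥0∞) = ENNReal.ofReal (F (⌈(Metric.infDist x Gᶜ)⁻¹⌉₊) x) := by
              rw [hk]; simp
          _ ≤ ⨆ k, ENNReal.ofReal (F k x) := le_iSup (fun k => ENNReal.ofReal (F k x)) _
    · rw [Set.indicator_of_notMem hx]
      have hx' : x ∈ Gᶜ := hx
      simp [hFdef, Metric.infDist_zero_of_mem hx']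
  have hFint : ∀ (k : ℕ) (μ : Measure X), IsProbabilityMeasure μ → Integrable (F k) μ := by
    intro k μ hμ
    haveI := hμ
    exact auxIntegrable (hFcont k).aestronglyMeasurable (hFabs k)
  have hTk : ∀ k, Tendsto (fun n => ∫ x, F k x ∂(mus n : Measure X)) atTop
      (nhds (∫ x, F k x ∂(pi : Measure X))) :=
    fun k => auxTendstoIntegralLip inferInstance (fun n => inferInstance) hW (hFlip k) (hFabs k)
  have hBound : ∀ k n, ENNReal.ofReal (∫ x, F k x ∂(mus n : Measure X))
      ≤ (mus n : Measure X) G := by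
    intro k n
    have h1 : ∫ x, F k x ∂(mus n : Measure X) ≤ ∫ x, G.indicator 1 x ∂(mus n : Measure X) := by
      apply integral_mono (hFint k _ inferInstance) ?_ (hFleInd k)
      exact (integrable_const (1 : ℝ)).indicator hG.measurableSet
    rw [integral_indicator_one hG.measurableSet] at h1
    calc ENNReal.ofReal (∫ x, F k x ∂(mus n : Measure X))
        ≤ ENNReal.ofReal (((mus n : Measure X) G).toReal) := ENNReal.ofReal_le_ofReal h1
      _ = (mus n : Measure X) G := ENNReal.ofReal_toReal (measure_ne_top _ _)
  have hliminf : ∀ k, ENNReal.ofReal (∫ x, F k x ∂(pi : Measure X))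
      ≤ atTop.liminf fun n => (mus n : Measure X) G := by
    intro k
    have hofT : Tendsto (fun n => ENNReal.ofReal (∫ x, F k x ∂(mus n : Measure X))) atTop
        (nhds (ENNReal.ofReal (∫ x, F k x ∂(pi : Measure X)))) :=
      (ENNReal.continuous_ofReal.tendsto _).comp (hTk k)
    rw [← hofT.liminf_eq]
    exact liminf_le_liminf (Filter.Eventually.of_forall fun n => hBound k n)
  have hπG : (pi : Measure X) G = ⨆ k, ENNReal.ofReal (∫ x, F k x ∂(pi : Measure X)) := by
    have h1 : ∀ k, ENNReal.ofReal (∫ x, F k x ∂(pi : Measure X))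
        = ∫⁻ x, ENNReal.ofReal (F k x) ∂(pi : Measure X) :=
      fun k => ofReal_integral_eq_lintegral_ofReal (hFint k _ inferInstance)
        (Filter.Eventually.of_forall (hF0 k))
    calc (pi : Measure X) G
        = ∫⁻ x, G.indicator (1 : X → ℝ≥0∞) x ∂(pi : Measure X) := by
          rw [lintegral_indicator_one hG.measurableSet]
      _ = ∫⁻ x, ⨆ k, ENNReal.ofReal (F k x) ∂(pi : Measure X) := by
          apply lintegral_congr
          intro x
          exact (hsup x).symm
      _ = ⨆ k, ∫⁻ x, ENNReal.ofReal (F k x) ∂(pi : Measure X) := by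
          rw [lintegral_iSup (fun k => (hFcont k).measurable.ennreal_ofReal)
            (fun i j hij x => ENNReal.ofReal_le_ofReal (hFmono x hij))]
      _ = ⨆ k, ENNReal.ofReal (∫ x, F k x ∂(pi : Measure X)) :=
          iSup_congr fun k => (h1 k).symm
  have main : (pi : Measure X) G ≤ atTop.liminf fun n => (mus n : Measure X) G := by
    rw [hπG]
    exact iSup_le hliminf
  -- convert to the ℝ≥0-valued statement
  have hbdd : IsBoundedUnder (· ≤ ·) atTop (fun n => mus n G) := by
    refine ⟨1, eventually_map.mpr (Filter.Eventually.of_forall fun n => ?_)⟩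
    exact ProbabilityMeasure.apply_le_one _ _
  have aux : ((atTop.liminf fun n => mus n G : ℝ≥0) : ℝ≥0∞)
      = atTop.liminf fun n => ((mus n G : ℝ≥0) : ℝ≥0∞) := by
    refine Monotone.map_liminf_of_continuousAt (F := atTop) ENNReal.coe_mono
      (fun n => mus n G) ENNReal.continuous_coe.continuousAt ?_ ?_
    · exact hbdd.isCoboundedUnder_ge
    · exact ⟨0, eventually_map.mpr (Filter.Eventually.of_forall fun n => zero_le)⟩
  rw [← ENNReal.coe_le_coe, aux]
  simpa [ProbabilityMeasure.ennreal_coeFn_eq_coeFn_toMeasure] using main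

end Aux

/-! ### Kernel iterates -/

section KernelIter

variable {X : Type*} [MeasurableSpace X]

/-- The `n`-fold iterate of a kernel. -/
noncomputable def kIter (P : Kernel X X) : ℕ → Kernel X X
  | 0 => Kernel.id
  | n + 1 => P ∘ₖ kIter P n

instance kIterMarkov (P : Kernel X X) [IsMarkovKernel P] (n : ℕ) :
    IsMarkovKernel (kIter P n) := by
  induction n with
  | zero => exact inferInstanceAs (IsMarkovKernel (Kernel.id : Kernel X X))
  | succ n ih => exact inferInstanceAs (IsMarkovKernel (P ∘ₖ kIter P n))

lemma stepN_eq (P : Kernel X X) (n : ℕ) (μ : Measure X) :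
    stepN P n μ = μ.bind (kIter P n) := by
  induction n with
  | zero =>
    show μ = μ.bind (fun a => (Kernel.id : Kernel X X) a)
    have : (fun a => (Kernel.id : Kernel X X) a) = Measure.dirac := funext Kernel.id_apply
    rw [this, Measure.bind_dirac]
  | succ n ih =>
    show (stepN P n μ).bind (fun x => P x) = μ.bind (kIter P (n + 1))
    rw [ih, Measure.bind_bind (kIter P n).measurable.aemeasurable P.measurable.aemeasurable]
    apply congrArg
    funext a
    rw [show kIter P (n + 1) a = (P ∘ₖ kIter P n) a from rfl, Kernel.comp_apply]

lemma stepN_dirac (P : Kernel X X) (n : ℕ) (x : X) :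
    stepN P n (Measure.dirac x) = kIter P n x := by
  rw [stepN_eq, Measure.dirac_bind (kIter P n).measurable]

end KernelIter

lemma auxBddNN {X : Type*} [TopologicalSpace X] (f : X →ᵇ ℝ≥0) :
    ∃ M : ℝ≥0, ∀ x, f x ≤ M := by
  rcases isEmpty_or_nonempty X with h | h
  · exact ⟨0, fun x => h.elim x⟩
  · obtain ⟨y₀⟩ := h
    obtain ⟨C, hC⟩ := f.bounded
    refine ⟨f y₀ + Real.toNNReal C, fun x => ?_⟩
    have h1 := hC x y₀
    rw [NNReal.dist_eq] at h1
    have h2 : (f x : ℝ) ≤ (f y₀ : ℝ) + C := by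
      have h3 := (abs_le.mp h1).2
      linarith
    rw [← NNReal.coe_le_coe, NNReal.coe_add, Real.coe_toNNReal']
    calc (f x : ℝ) ≤ (f y₀ : ℝ) + C := h2
      _ ≤ (f y₀ : ℝ) + max C 0 := add_le_add_right (le_max_left _ _) _

/-- Proposition 1, weak Feller case. Under (B1)-(B3), if `P` is weak Feller,
then the limit measure `π` is the unique stationary distribution of `P`. -/
theorem stmt3 {X : Type*} [MetricSpace X] [CompleteSpace X] [SecondCountableTopology X]
    [MeasurableSpace X] [BorelSpace X]
    (P : Kernel X X) [IsMarkovKernel P]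
    -- (B1)
    (V : X → ℝ) (hVmeas : Measurable V) (hV0 : ∀ x, 0 ≤ V x)
    (a : ℝ) (ha : 0 < a)
    (hB1 : ∀ x y : X, a⁻¹ * dist x y ≤ V x + V y + 1)
    (hPVfin : ∀ x : X, Integrable V (P x))
    -- (B2)
    (Γ : X → X → ℝ) (hΓmeas : Measurable (Function.uncurry Γ)) (hΓ0 : ∀ x y, 0 ≤ Γ x y)
    (hB2 : ∀ x y : X, wassDist (P x) (P y) ≤ ENNReal.ofReal (Γ x y * dist x y))
    -- the function Λ
    (Λ : X → X → ℝ) (hΛ0 : ∀ x y, 0 ≤ Λ x y)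
    (hΛ : ∀ x y : X,
      ((∫ z, V z ∂(P x)) + (∫ z, V z ∂(P y)) + 1) / (V x + V y + 1) ≤ Λ x y)
    -- (B3)
    (hB3 : ∃ r ρ : ℝ, 0 < r ∧ r < 1 ∧
      IsLUB (Set.range fun p : X × X => Γ p.1 p.2 ^ r * Λ p.1 p.2 ^ (1 - r)) ρ ∧ ρ < 1)
    -- the limit measure π
    (π : Measure X) (hπ : IsProbabilityMeasure π) (hπψ : memPpsi π)
    (hπlim : ∀ x : X,
      Tendsto (fun n : ℕ => wassDist (stepN P n (Measure.dirac x)) π) atTop (nhds 0))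
    -- P is weak Feller: Pf is bounded continuous whenever f is bounded continuous
    (hFeller : ∀ f : X → ℝ, Continuous f → (∃ M : ℝ, ∀ x, |f x| ≤ M) →
      Continuous (fun x => ∫ y, f y ∂(P x)) ∧ ∃ M : ℝ, ∀ x, |∫ y, f y ∂(P x)| ≤ M) :
    π.bind (fun x => P x) = π ∧
      ∀ π' : Measure X, IsProbabilityMeasure π' → π'.bind (fun x => P x) = π' → π' = π := by
  classical
  haveI := hπ
  obtain ⟨x₀⟩ : Nonempty X := auxNonempty hπ
  -- rephrase the convergence hypothesis using kernel iterates
  have hWx : ∀ x : X, Tendsto (fun n => wassDist ((kIter P n) x) π) atTop (nhds 0) := by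
    intro x
    have h := hπlim x
    simpa [stepN_dirac] using h
  haveI hPn : ∀ (n : ℕ) (x : X), IsProbabilityMeasure ((kIter P n) x) := fun n x =>
    inferInstance
  -- weak convergence, in terms of lintegrals of nonnegative bounded continuous functions
  have hL : ∀ (x : X) (f : X →ᵇ ℝ≥0),
      Tendsto (fun n => ∫⁻ y, (f y : ℝ≥0∞) ∂((kIter P n) x)) atTop
        (nhds (∫⁻ y, (f y : ℝ≥0∞) ∂π)) := by
    intro x f
    have h := auxWeakTendsto ⟨π, hπ⟩ (fun n => ⟨(kIter P n) x, hPn n x⟩) (hWx x)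
    exact ProbabilityMeasure.tendsto_iff_forall_lintegral_tendsto.mp h f
  -- f measurable
  have hfm : ∀ f : X →ᵇ ℝ≥0, Measurable fun y => (f y : ℝ≥0∞) := fun f =>
    measurable_coe_nnreal_ennreal.comp f.continuous.measurable
  -- the Feller property in terms of ℝ≥0-valued bounded continuous functions
  have hPf : ∀ f : X →ᵇ ℝ≥0, ∃ F : X →ᵇ ℝ≥0,
      ∀ x, (F x : ℝ≥0∞) = ∫⁻ y, (f y : ℝ≥0∞) ∂(P x) := by
    intro f
    obtain ⟨Mf, hMf⟩ := auxBddNN f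
    set g : X → ℝ := fun x => ∫ y, (f y : ℝ) ∂(P x) with hg
    have hfc : Continuous fun y => (f y : ℝ) := NNReal.continuous_coe.comp f.continuous
    have hfb : ∀ y, |(f y : ℝ)| ≤ (Mf : ℝ) := by
      intro y
      rw [abs_of_nonneg (f y).coe_nonneg]
      exact_mod_cast hMf y
    obtain ⟨hgc, Mg, hMg⟩ := hFeller _ hfc ⟨(Mf : ℝ), hfb⟩
    have hg0 : ∀ x, 0 ≤ g x := fun x => integral_nonneg fun y => (f y).coe_nonneg
    have hgM : ∀ x, |g x| ≤ Mg := hMg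
    refine ⟨⟨⟨fun x => Real.toNNReal (g x), continuous_real_toNNReal.comp hgc⟩,
      ⟨2 * Mg, fun x y => ?_⟩⟩, ?_⟩
    · rw [NNReal.dist_eq]
      simp only [ContinuousMap.coe_mk]
      rw [Real.coe_toNNReal _ (hg0 x), Real.coe_toNNReal _ (hg0 y)]
      have h1 := abs_le.mp (hgM x)
      have h2 := abs_le.mp (hgM y)
      rw [abs_le]
      constructor <;> linarith
    · intro x
      show ((Real.toNNReal (g x) : ℝ≥0) : ℝ≥0∞) = ∫⁻ y, (f y : ℝ≥0∞) ∂(P x)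
      have hint : Integrable (fun y => (f y : ℝ)) (P x) :=
        auxIntegrable hfc.aestronglyMeasurable hfb
      have hid : ((Real.toNNReal (g x) : ℝ≥0) : ℝ≥0∞) = ENNReal.ofReal (g x) := rfl
      rw [hid, hg, ofReal_integral_eq_lintegral_ofReal hint
        (Filter.Eventually.of_forall fun y => (f y).coe_nonneg)]
      simp_rw [ENNReal.ofReal_coe_nnreal]
  -- stationarity of π
  have hstat : π.bind (fun x => P x) = π := by
    haveI : IsProbabilityMeasure (π.bind (fun x => P x)) := by
      constructor
      rw [Measure.bind_apply MeasurableSet.univ P.measurable.aemeasurable]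
      simp
    apply ext_of_forall_lintegral_eq_of_IsFiniteMeasure
    intro f
    obtain ⟨F, hF⟩ := hPf f
    rw [Measure.lintegral_bind P.measurable.aemeasurable (hfm f).aemeasurable]
    have h1 : ∫⁻ x, (∫⁻ y, (f y : ℝ≥0∞) ∂(P x)) ∂π = ∫⁻ x, (F x : ℝ≥0∞) ∂π :=
      lintegral_congr fun x => (hF x).symm
    rw [h1]
    have t1 : Tendsto (fun n => ∫⁻ y, (f y : ℝ≥0∞) ∂((kIter P (n + 1)) x₀)) atTop
        (nhds (∫⁻ y, (f y : ℝ≥0∞) ∂π)) := by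
      have h := (hL x₀ f).comp (tendsto_add_atTop_nat 1)
      exact h
    have t2 : ∀ n, ∫⁻ y, (f y : ℝ≥0∞) ∂((kIter P (n + 1)) x₀)
        = ∫⁻ x, (F x : ℝ≥0∞) ∂((kIter P n) x₀) := by
      intro n
      have hc : (kIter P (n + 1)) x₀ = ((kIter P n) x₀).bind (fun x => P x) :=
        Kernel.comp_apply _ _ _
      rw [hc, Measure.lintegral_bind P.measurable.aemeasurable (hfm f).aemeasurable]
      exact lintegral_congr fun x => (hF x).symm
    simp_rw [t2] at t1
    exact tendsto_nhds_unique (hL x₀ F) t1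
  refine ⟨hstat, ?_⟩
  -- uniqueness
  intro π' hπ' hstat'
  haveI := hπ'
  have hstepN : ∀ n, stepN P n π' = π' := by
    intro n
    induction n with
    | zero => rfl
    | succ n ih =>
      show (stepN P n π').bind (fun x => P x) = π'
      rw [ih, hstat']
  have hbindIter : ∀ n, π'.bind (fun x => (kIter P n) x) = π' := by
    intro n
    have h := hstepN n
    rwa [stepN_eq] at h
  apply ext_of_forall_lintegral_eq_of_IsFiniteMeasure
  intro f
  have hconst : ∀ n, ∫⁻ y, (f y : ℝ≥0∞) ∂π'
      = ∫⁻ x, (∫⁻ y, (f y : ℝ≥0∞) ∂((kIter P n) x)) ∂π' := by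
    intro n
    conv_lhs => rw [← hbindIter n]
    rw [Measure.lintegral_bind (kIter P n).measurable.aemeasurable (hfm f).aemeasurable]
  obtain ⟨Mf, hMf⟩ := auxBddNN f
  have hfb : ∀ y, (f y : ℝ≥0∞) ≤ (Mf : ℝ≥0∞) := fun y => ENNReal.coe_le_coe.mpr (hMf y)
  have hdom : Tendsto (fun n => ∫⁻ x, (∫⁻ y, (f y : ℝ≥0∞) ∂((kIter P n) x)) ∂π') atTop
      (nhds (∫⁻ x, (∫⁻ y, (f y : ℝ≥0∞) ∂π) ∂π')) := by
    apply tendsto_lintegral_of_dominated_convergence (bound := fun _ => (Mf : ℝ≥0∞))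
    · intro n
      exact Measurable.lintegral_kernel (hfm f)
    · intro n
      refine Filter.Eventually.of_forall fun x => ?_
      calc ∫⁻ y, (f y : ℝ≥0∞) ∂((kIter P n) x)
          ≤ ∫⁻ _, (Mf : ℝ≥0∞) ∂((kIter P n) x) := lintegral_mono fun y => hfb y
        _ = (Mf : ℝ≥0∞) := by
            rw [lintegral_const, measure_univ, mul_one]
    · rw [lintegral_const, measure_univ, mul_one]
      exact ENNReal.coe_ne_top
    · exact Filter.Eventually.of_forall fun x => hL x f
  rw [lintegral_const, measure_univ, mul_one] at hdom
  simp_rw [← hconst] at hdom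
  exact tendsto_nhds_unique tendsto_const_nhds hdom
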